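/- If α < ζ/λ, then the tumor-free equilibrium (0, ζ/λ) of the treatment-free system is linearly (asymptotically) stable: all eigenvalues of the Jacobian at that point have negative real part. -/

import Mathlib

/-- If `α < ζ/λ` then the tumor-free equilibrium is linearly stable: all (complex)
eigenvalues of the Jacobian there have negative real part. -/
theorem tumor_free_stable
    (α β ζ lam η θ : ℝ) (hα : 0 < α) (hβ : 0 < β) (hζ : 0 < ζ)
    (hlam : 0 < lam) (hη : 0 < η) (hθ : 0 < θ)
    (f1 f2 : ℝ → ℝ → ℝ)
    (hf1 : ∀ x1 x2, f1 x1 x2 = α * x1 * (1 - β * x1) - x1 * x2)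
    (hf2 : ∀ x1 x2, f2 x1 x2 = ζ - lam * x2 + η * x1 * x2 / (θ + x1))
    (J : Matrix (Fin 2) (Fin 2) ℝ)
    (hJ : J = Matrix.of
      ![![deriv (fun x1 => f1 x1 (ζ / lam)) 0, deriv (fun x2 => f1 0 x2) (ζ / lam)],
        ![deriv (fun x1 => f2 x1 (ζ / lam)) 0, deriv (fun x2 => f2 0 x2) (ζ / lam)]])
    (h : α < ζ / lam) :
    ∀ μ ∈ spectrum ℂ (J.map (Complex.ofReal)), μ.re < 0 := by
  have hc : (0:ℝ) < ζ / lam := div_pos hζ hlam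
  set c := ζ / lam with hcdef
  -- entry (0,0)
  have e00 : deriv (fun x1 => f1 x1 c) 0 = α - c := by
    simp only [hf1]
    have ha : HasDerivAt (fun x : ℝ => α * x) α 0 := by
      simpa using (hasDerivAt_id (0:ℝ)).const_mul α
    have hb : HasDerivAt (fun x : ℝ => 1 - β * x) (-β) 0 := by
      simpa using ((hasDerivAt_id (0:ℝ)).const_mul β).const_sub 1
    have hcd : HasDerivAt (fun x : ℝ => x * c) c 0 := by
      simpa using (hasDerivAt_id (0:ℝ)).mul_const c
    have h1 : HasDerivAt (fun x : ℝ => α * x * (1 - β * x) - x * c) (α - c) 0 := by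
      have := (ha.mul hb).sub hcd
      convert this using 1
      · rfl
      · rfl
      · rfl
      · ring
    exact h1.deriv
  -- entry (0,1)
  have e01 : deriv (fun x2 => f1 0 x2) c = 0 := by
    simp only [hf1]
    simp
  -- entry (1,0)
  have e10 : deriv (fun x1 => f2 x1 c) 0 = η * c / θ := by
    simp only [hf2]
    have hnum : HasDerivAt (fun x : ℝ => η * x * c) (η * c) 0 := by
      simpa using ((hasDerivAt_id (0:ℝ)).const_mul η).mul_const c
    have hden : HasDerivAt (fun x : ℝ => θ + x) 1 0 := by
      simpa using (hasDerivAt_id (0:ℝ)).const_add θ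
    have hθ0 : θ + (0:ℝ) ≠ 0 := by positivity
    have hq := hnum.div hden hθ0
    have h2 := (hasDerivAt_const (0:ℝ) (ζ - lam * c)).add hq
    rw [show deriv (fun x1 => ζ - lam * c + η * x1 * c / (θ + x1)) 0 = _ from h2.deriv]
    field_simp
    ring
  -- entry (1,1)
  have e11 : deriv (fun x2 => f2 0 x2) c = -lam := by
    simp only [hf2]
    have hlast : HasDerivAt (fun x2 : ℝ => η * 0 * x2 / (θ + 0)) 0 c := by
      simp only [mul_zero, zero_mul, zero_div]
      exact hasDerivAt_const _ _
    have hfirst : HasDerivAt (fun x2 : ℝ => ζ - lam * x2) (-lam) c := by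
      simpa using ((hasDerivAt_id c).const_mul lam).const_sub ζ
    have h2 := hfirst.add hlast
    rw [show deriv (fun x2 => ζ - lam * x2 + η * 0 * x2 / (θ + 0)) c = _ from h2.deriv]; ring
  subst hJ
  intro μ hμ
  rw [spectrum.mem_iff] at hμ
  have hdet : (algebraMap ℂ (Matrix (Fin 2) (Fin 2) ℂ) μ -
      (Matrix.of
        ![![deriv (fun x1 => f1 x1 c) 0, deriv (fun x2 => f1 0 x2) c],
          ![deriv (fun x1 => f2 x1 c) 0, deriv (fun x2 => f2 0 x2) c]]).map
        Complex.ofReal).det = 0 := by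
    by_contra hne
    exact hμ ((Matrix.isUnit_iff_isUnit_det _).mpr (isUnit_iff_ne_zero.mpr hne))
  rw [Matrix.det_fin_two] at hdet
  simp only [Matrix.sub_apply, Matrix.map_apply, Matrix.of_apply, Matrix.cons_val',
    Matrix.cons_val_zero, Matrix.cons_val_one, Matrix.head_cons, Matrix.empty_val',
    Matrix.cons_val_fin_one, Matrix.head_fin_const, Matrix.algebraMap_matrix_apply,
    e00, e01, e10, e11] at hdet
  norm_num at hdet
  rcases hdet with h1 | h2
  · have : μ = (α : ℂ) - (c : ℂ) := by linear_combination h1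
    rw [this]
    simp only [Complex.sub_re, Complex.ofReal_re]
    linarith
  · have : μ = -(lam : ℂ) := by linear_combination h2
    rw [this]
    simp only [Complex.neg_re, Complex.ofReal_re]
    linarith
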